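/- arXiv:2005.12773 — 3 statements merged into one kernel-verified Lean document; each statement's English description precedes it below -/
import Mathlib

section
/- For every bounded linear operator T on a Banach space X, the numerical radius v(T) equals the infimum over δ > 0 of v_δ(T), where v_δ(T) = sup{ |x*(Tx)| : x ∈ closed unit ball of X, x* ∈ closed unit ball of X*, Re x*(x) > 1 - δ }. -/
open Metric Set

/-- The numerical radius of a bounded linear operator `T` on a normed space `X` over `𝕜`:
`v(T) = sup { ‖x*(Tx)‖ : x ∈ S_X, x* ∈ S_{X*}, x*(x) = 1 }`. -/
noncomputable def numRadius (𝕜 : Type*) [RCLike 𝕜] {X : Type*} [NormedAddCommGroup X]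
    [NormedSpace 𝕜 X] (T : X →L[𝕜] X) : ℝ :=
  sSup {r : ℝ | ∃ (x : X) (f : X →L[𝕜] 𝕜), ‖x‖ = 1 ∧ ‖f‖ = 1 ∧ f x = 1 ∧ r = ‖f (T x)‖}

/-- The numerical index of a normed space: `n(X) = inf { v(T) : T ∈ L(X), ‖T‖ = 1 }`. -/
noncomputable def numIndex (𝕜 : Type*) [RCLike 𝕜] (X : Type*) [NormedAddCommGroup X]
    [NormedSpace 𝕜 X] : ℝ :=
  sInf {r : ℝ | ∃ T : X →L[𝕜] X, ‖T‖ = 1 ∧ r = numRadius 𝕜 T}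

/-- `v_δ(T)` computed with points taken in `A ⊆ B_X` and functionals in `B ⊆ B_{X*}`. -/
noncomputable def numRadiusDeltaOn (𝕜 : Type*) [RCLike 𝕜] {X : Type*} [NormedAddCommGroup X]
    [NormedSpace 𝕜 X] (T : X →L[𝕜] X) (A : Set X) (B : Set (X →L[𝕜] 𝕜)) (δ : ℝ) : ℝ :=
  sSup {r : ℝ | ∃ x ∈ A, ∃ f ∈ B, 1 - δ < RCLike.re (f x) ∧ r = ‖f (T x)‖}

/-- `Z` (together with the bounded bilinear map `t`) is the projective tensor product
`X ⊗̂_π Y`: it is complete, elementary tensors have norm `‖x‖‖y‖`, and the closed unit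
ball of `Z` is the closed convex hull of `B_X ⊗ B_Y`. -/
structure IsProjectiveTensorProduct (𝕜 : Type*) [RCLike 𝕜] {X Y Z : Type*}
    [NormedAddCommGroup X] [NormedSpace 𝕜 X] [NormedAddCommGroup Y] [NormedSpace 𝕜 Y]
    [NormedAddCommGroup Z] [NormedSpace 𝕜 Z] [NormedSpace ℝ Z] [IsScalarTower ℝ 𝕜 Z]
    (t : X →L[𝕜] Y →L[𝕜] Z) : Prop where
  complete : CompleteSpace Z
  norm_tmul : ∀ x y, ‖t x y‖ = ‖x‖ * ‖y‖
  ball_eq : closedBall (0 : Z) 1 = closure (convexHull ℝ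
      {z : Z | ∃ x ∈ closedBall (0 : X) 1, ∃ y ∈ closedBall (0 : Y) 1, z = t x y})

/-- `Z` (together with the bounded bilinear map `t`) is the injective tensor product
`X ⊗̂_ε Y`: it is complete, the span of elementary tensors is dense, and on that span
the norm is the injective tensor norm. -/
structure IsInjectiveTensorProduct (𝕜 : Type*) [RCLike 𝕜] {X Y Z : Type*}
    [NormedAddCommGroup X] [NormedSpace 𝕜 X] [NormedAddCommGroup Y] [NormedSpace 𝕜 Y]
    [NormedAddCommGroup Z] [NormedSpace 𝕜 Z] (t : X →L[𝕜] Y →L[𝕜] Z) : Prop where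
  complete : CompleteSpace Z
  dense_span : Dense (Submodule.span 𝕜 {z : Z | ∃ x y, z = t x y} : Set Z)
  norm_sum : ∀ (n : ℕ) (x : Fin n → X) (y : Fin n → Y),
    ‖∑ i, t (x i) (y i)‖ = sSup {r : ℝ | ∃ (f : X →L[𝕜] 𝕜) (g : Y →L[𝕜] 𝕜),
      ‖f‖ ≤ 1 ∧ ‖g‖ ≤ 1 ∧ r = ‖∑ i, f (x i) * g (y i)‖}

/-- A slice of a bounded set `A`: `{a ∈ A : Re f(a) > sup Re f(A) - δ}`. -/
def sliceOf (𝕜 : Type*) [RCLike 𝕜] {X : Type*} [NormedAddCommGroup X] [NormedSpace 𝕜 X]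
    (A : Set X) (f : X →L[𝕜] 𝕜) (δ : ℝ) : Set X :=
  {a ∈ A | sSup {r : ℝ | ∃ b ∈ A, r = RCLike.re (f b)} - δ < RCLike.re (f a)}

/-- A set `A` is slicely countably determined (SCD) if there is a countable determining
family of slices of `A`: any `B ⊆ A` meeting every slice of the family has
closed convex hull containing `A`. -/
def IsSCD (𝕜 : Type*) [RCLike 𝕜] {X : Type*} [NormedAddCommGroup X] [NormedSpace 𝕜 X]
    [NormedSpace ℝ X] [IsScalarTower ℝ 𝕜 X] (A : Set X) : Prop :=
  ∃ V : ℕ → Set X, (∀ n, ∃ (f : X →L[𝕜] 𝕜) (δ : ℝ), 0 < δ ∧ V n = sliceOf 𝕜 A f δ) ∧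
    ∀ B ⊆ A, (∀ n, (B ∩ V n).Nonempty) → A ⊆ closure (convexHull ℝ B)

/-- The Daugavet property: `‖Id + T‖ = 1 + ‖T‖` for every rank-one operator `T`. -/
def DaugavetProperty (𝕜 : Type*) [RCLike 𝕜] (X : Type*) [NormedAddCommGroup X]
    [NormedSpace 𝕜 X] : Prop :=
  ∀ T : X →L[𝕜] X, (∃ (f : X →L[𝕜] 𝕜) (x₀ : X), ∀ x, T x = f x • x₀) →
    ‖ContinuousLinearMap.id 𝕜 X + T‖ = 1 + ‖T‖
section Aux

/-- Ekeland-type maximization principle on a closed subset of a Banach space. -/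
private lemma ekeland_max {X : Type*} [NormedAddCommGroup X] [CompleteSpace X]
    {K : Set X} (hKc : IsClosed K) (φ : X → ℝ) (hφ : Continuous φ)
    {M : ℝ} (hM : ∀ z ∈ K, φ z ≤ M) {ε : ℝ} (hε : 0 < ε) {x : X} (hx : x ∈ K) :
    ∃ y ∈ K, (φ x + ε * ‖y - x‖ ≤ φ y) ∧ ∀ z ∈ K, φ z ≤ φ y + ε * ‖z - y‖ := by
  classical
  set S : X → Set X := fun w => {z | z ∈ K ∧ φ w + ε * ‖z - w‖ ≤ φ z} with hSdef
  have hmem : ∀ w ∈ K, w ∈ S w := fun w hw => ⟨hw, by simp⟩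
  have hsub : ∀ w, S w ⊆ K := fun w z hz => hz.1
  have htrans : ∀ w z, z ∈ S w → S z ⊆ S w := by
    rintro w z ⟨hzK, hz⟩ u ⟨huK, hu⟩
    refine ⟨huK, ?_⟩
    have htri : ‖u - w‖ ≤ ‖u - z‖ + ‖z - w‖ := by
      simpa [dist_eq_norm] using dist_triangle u z w
    nlinarith [mul_le_mul_of_nonneg_left htri hε.le]
  have hclosed : ∀ w, IsClosed (S w) := by
    intro w
    have : S w = K ∩ {z | φ w + ε * ‖z - w‖ ≤ φ z} := rfl
    rw [this]
    exact hKc.inter (isClosed_le (by fun_prop) hφ)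
  have hch : ∀ (n : ℕ) (w : X), ∃ w', w ∈ K →
      w' ∈ S w ∧ ∀ z ∈ S w, φ z ≤ φ w' + (1 / 2 : ℝ) ^ n := by
    intro n w
    by_cases hw : w ∈ K
    · have hne : (φ '' S w).Nonempty := ⟨φ w, w, hmem w hw, rfl⟩
      have hbdd : BddAbove (φ '' S w) := ⟨M, by rintro _ ⟨z, hz, rfl⟩; exact hM z (hsub w hz)⟩
      have hlt : sSup (φ '' S w) - (1 / 2 : ℝ) ^ n < sSup (φ '' S w) :=
        sub_lt_self _ (by positivity)
      obtain ⟨r, ⟨w', hw', rfl⟩, hr⟩ := exists_lt_of_lt_csSup hne hlt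
      refine ⟨w', fun _ => ⟨hw', fun z hz => ?_⟩⟩
      have h1 : φ z ≤ sSup (φ '' S w) := le_csSup hbdd ⟨z, hz, rfl⟩
      linarith
    · exact ⟨w, fun h => absurd h hw⟩
  choose nxt hnxt using hch
  set seq : ℕ → X := fun n => Nat.rec x (fun n y => nxt n y) n with hseqdef
  have hseq0 : seq 0 = x := rfl
  have hseqsucc : ∀ n, seq (n + 1) = nxt n (seq n) := fun n => rfl
  have hseqK : ∀ n, seq n ∈ K := by
    intro n
    induction n with
    | zero => exact hx
    | succ n ih =>
      rw [hseqsucc]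
      exact hsub _ ((hnxt n (seq n) ih).1)
  have hstep : ∀ n, seq (n + 1) ∈ S (seq n) := fun n => by
    rw [hseqsucc]; exact (hnxt n (seq n) (hseqK n)).1
  have hapx : ∀ n, ∀ z ∈ S (seq n), φ z ≤ φ (seq (n + 1)) + (1 / 2 : ℝ) ^ n := fun n => by
    rw [hseqsucc]; exact (hnxt n (seq n) (hseqK n)).2
  have hchain : ∀ n m, n ≤ m → seq m ∈ S (seq n) := by
    intro n m h
    induction m, h using Nat.le_induction with
    | base => exact hmem _ (hseqK n)
    | succ m hm ih => exact htrans _ _ ih (hstep m)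
  have hdist : ∀ n m, n + 1 ≤ m → ‖seq m - seq (n + 1)‖ ≤ (1 / 2 : ℝ) ^ n / ε := by
    intro n m h
    have h1 := (hchain (n + 1) m h).2
    have h2 := hapx n (seq m) (hchain n m (by omega))
    rw [le_div_iff₀ hε]
    nlinarith
  -- Cauchy
  have hcauchy : CauchySeq seq := by
    rw [Metric.cauchySeq_iff']
    intro κ hκ
    obtain ⟨n₀, hn₀⟩ := exists_pow_lt_of_lt_one (mul_pos hε hκ) (by norm_num : (1 / 2 : ℝ) < 1)
    refine ⟨n₀ + 1, fun n hn => ?_⟩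
    rcases eq_or_lt_of_le hn with rfl | hlt
    · simpa using hκ
    · have h1 := hdist n₀ n hn
      have h2 : (1 / 2 : ℝ) ^ n₀ / ε < κ := by
        rw [div_lt_iff₀ hε]; nlinarith
      rw [dist_eq_norm]
      linarith
  obtain ⟨y, hy⟩ := cauchySeq_tendsto_of_complete hcauchy
  have hyS : ∀ n, y ∈ S (seq n) := by
    intro n
    refine (hclosed (seq n)).mem_of_tendsto hy ?_
    filter_upwards [Filter.eventually_ge_atTop n] with m hm
    exact hchain n m hm
  have hyK : y ∈ K := (hyS 0).1
  have hymax : ∀ n, φ (seq n) ≤ φ y := by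
    intro n
    have := (hyS n).2
    nlinarith [norm_nonneg (y - seq n)]
  refine ⟨y, hyK, (hyS 0).2, ?_⟩
  intro z hz
  by_contra hcon
  push_neg at hcon
  have hzS : ∀ n, z ∈ S (seq n) := by
    intro n
    refine ⟨hz, ?_⟩
    have h1 := (hyS n).2
    have htri : ‖z - seq n‖ ≤ ‖z - y‖ + ‖y - seq n‖ := by
      simpa [dist_eq_norm] using dist_triangle z y (seq n)
    nlinarith [mul_le_mul_of_nonneg_left htri hε.le]
  have hle : ∀ n : ℕ, φ z ≤ φ y + (1 / 2 : ℝ) ^ n := by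
    intro n
    have h1 := hapx n z (hzS n)
    have h2 := hymax (n + 1)
    linarith
  have hzy : φ z ≤ φ y := by
    by_contra h
    push_neg at h
    obtain ⟨n, hn⟩ := exists_pow_lt_of_lt_one (sub_pos.2 h) (by norm_num : (1 / 2 : ℝ) < 1)
    have := hle n
    linarith
  nlinarith [norm_nonneg (z - y)]


/-- Separation step: if `ψ` (real functional) attains on `B_X` an `ε`-sharp maximum at `y`,
then `ψ` splits as a small functional plus one attaining its max on the ball at `y`. -/
private lemma sep_step {X : Type*} [NormedAddCommGroup X] [NormedSpace ℝ X]
    (ψ : X →L[ℝ] ℝ) {y : X} (hy : y ∈ closedBall (0 : X) 1) {ε : ℝ} (hε : 0 < ε)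
    (hmax : ∀ z ∈ closedBall (0 : X) 1, ψ z ≤ ψ y + ε * ‖z - y‖) :
    ∃ φ : X →L[ℝ] ℝ, ‖φ‖ ≤ ε ∧ ∀ z ∈ closedBall (0 : X) 1, ψ z - φ z ≤ ψ y - φ y := by
  classical
  set A : Set (X × ℝ) := {p | ε * ‖p.1‖ < p.2} with hAdef
  set B : Set (X × ℝ) := {p | ∃ z ∈ closedBall (0 : X) 1, p = (z - y, ψ z - ψ y)} with hBdef
  have hAconv : Convex ℝ A := by
    rintro ⟨u, t⟩ hu ⟨v, r⟩ hv a b ha hb hab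
    simp only [hAdef, mem_setOf_eq] at hu hv ⊢
    have key : ε * ‖a • u + b • v‖ ≤ a * (ε * ‖u‖) + b * (ε * ‖v‖) := by
      have h1 : ‖a • u + b • v‖ ≤ a * ‖u‖ + b * ‖v‖ := by
        calc ‖a • u + b • v‖ ≤ ‖a • u‖ + ‖b • v‖ := norm_add_le _ _
        _ = a * ‖u‖ + b * ‖v‖ := by
            rw [norm_smul, norm_smul, Real.norm_eq_abs, Real.norm_eq_abs,
              abs_of_nonneg ha, abs_of_nonneg hb]
      nlinarith
    have hsnd : (a • (u, t) + b • (v, r)).2 = a * t + b * r := rfl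
    have hfst : (a • (u, t) + b • (v, r)).1 = a • u + b • v := rfl
    show ε * ‖(a • (u, t) + b • (v, r)).1‖ < (a • (u, t) + b • (v, r)).2
    rw [hsnd, hfst]
    rcases ha.eq_or_lt with rfl | ha'
    · have hb1 : b = 1 := by linarith
      subst hb1
      simpa using (by nlinarith : ε * ‖(0:ℝ) • u + (1:ℝ) • v‖ < 0 * t + 1 * r)
    · have h2 : a * (ε * ‖u‖) < a * t := by nlinarith
      have h3 : b * (ε * ‖v‖) ≤ b * r := by nlinarith
      linarith
  have hAopen : IsOpen A := isOpen_lt (by fun_prop) continuous_snd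
  have hBconv : Convex ℝ B := by
    rintro p ⟨z, hz, rfl⟩ q ⟨w, hw, rfl⟩ a b ha hb hab
    refine ⟨a • z + b • w, convex_closedBall (0 : X) 1 hz hw ha hb hab, ?_⟩
    have hb1 : b = 1 - a := by linarith
    subst hb1
    rw [Prod.smul_mk, Prod.smul_mk, Prod.mk_add_mk, Prod.mk.injEq]
    refine ⟨by module, ?_⟩
    rw [map_add, map_smul, map_smul]
    simp only [smul_eq_mul]
    ring
  have hdisj : Disjoint A B := by
    rw [Set.disjoint_left]
    rintro p hp ⟨z, hz, rfl⟩
    simp only [hAdef, mem_setOf_eq] at hp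
    have := hmax z hz
    linarith
  obtain ⟨Φ, s, hA, hB⟩ := geometric_hahn_banach_open hAconv hAopen hBconv hdisj
  set ψ₀ : X →L[ℝ] ℝ := Φ.comp (ContinuousLinearMap.inl ℝ X ℝ) with hψ₀def
  set c : ℝ := Φ (0, 1) with hcdef
  have hdecomp : ∀ (u : X) (t : ℝ), Φ (u, t) = ψ₀ u + t * c := by
    intro u t
    have h1 : (u, t) = (u, (0 : ℝ)) + t • ((0 : X), (1 : ℝ)) := by
      simp [Prod.ext_iff]
    rw [h1, map_add, map_smul]
    simp [hψ₀def, hcdef, smul_eq_mul]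
  have hs0 : s ≤ 0 := by
    have h := hB ((0 : X), (0 : ℝ)) ⟨y, hy, by simp⟩
    rw [hdecomp] at h
    simp only [map_zero, zero_mul, add_zero] at h
    exact h
  have hc : c < 0 := by
    have h1 := hA ((0 : X), (1 : ℝ)) (by simp [hAdef])
    rw [hdecomp 0 1] at h1
    simp only [map_zero, one_mul, zero_add] at h1
    linarith
  have h0s : 0 ≤ s := by
    by_contra h
    push_neg at h
    have hτ : (0 : ℝ) < s / (2 * c) := div_pos_iff.mpr (Or.inr ⟨h, by linarith⟩)
    have hmem : ((0 : X), s / (2 * c)) ∈ A := by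
      simp only [hAdef, mem_setOf_eq, norm_zero, mul_zero]
      exact hτ
    have h2 := hA _ hmem
    rw [hdecomp] at h2
    simp only [map_zero, zero_add] at h2
    have hc0 : c ≠ 0 := ne_of_lt hc
    have h3 : s / (2 * c) * c = s / 2 := by
      field_simp
    linarith
  have key1 : ∀ u : X, ψ₀ u + ε * ‖u‖ * c ≤ 0 := by
    intro u
    by_contra h
    push_neg at h
    set d : ℝ := ψ₀ u + ε * ‖u‖ * c with hddef
    have hτ : (0 : ℝ) < d / (-c) := div_pos h (by linarith)
    have hmem : (u, ε * ‖u‖ + d / (-c)) ∈ A := by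
      show ε * ‖u‖ < ε * ‖u‖ + d / (-c)
      linarith
    have h2 := hA _ hmem
    rw [hdecomp] at h2
    have hc0 : c ≠ 0 := ne_of_lt hc
    have hdc : d / (-c) * c = -d := by
      rw [div_neg, neg_mul, div_mul_cancel₀ d hc0]
    have h3 : (ε * ‖u‖ + d / (-c)) * c = ε * ‖u‖ * c - d := by
      rw [add_mul, hdc]
      ring
    nlinarith
  set φ : X →L[ℝ] ℝ := (-c)⁻¹ • ψ₀ with hφdef
  have hφapp : ∀ u, φ u = ψ₀ u / (-c) := by
    intro u
    simp [hφdef, div_eq_inv_mul]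
  have hφle : ∀ u, φ u ≤ ε * ‖u‖ := by
    intro u
    rw [hφapp, div_le_iff₀ (by linarith : (0:ℝ) < -c)]
    have := key1 u
    nlinarith
  refine ⟨φ, ?_, ?_⟩
  · refine ContinuousLinearMap.opNorm_le_bound _ hε.le fun u => ?_
    rw [Real.norm_eq_abs, abs_le]
    constructor
    · have := hφle (-u)
      simp only [map_neg, norm_neg] at this
      linarith
    · exact hφle u
  · intro z hz
    have h1 := hB _ ⟨z, hz, rfl⟩
    rw [hdecomp] at h1
    have h2 : 0 ≤ ψ₀ (z - y) + (ψ z - ψ y) * c := le_trans h0s h1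
    have h3 : (ψ z - ψ y) * (-c) ≤ ψ₀ (z - y) := by linarith
    have h4 : ψ z - ψ y ≤ φ (z - y) := by
      rw [hφapp, le_div_iff₀ (by linarith : (0:ℝ) < -c)]
      exact h3
    rw [map_sub] at h4
    linarith


private lemma rotate_re {𝕜 X : Type*} [RCLike 𝕜] [NormedAddCommGroup X] [NormedSpace 𝕜 X]
    (g : X →L[𝕜] 𝕜) {r : ℝ} (hr : r < ‖g‖) : ∃ z, ‖z‖ ≤ 1 ∧ r < RCLike.re (g z) := by
  obtain ⟨z₀, hz₀, hgz₀⟩ := g.exists_lt_apply_of_lt_opNorm hr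
  by_cases h : g z₀ = 0
  · exact ⟨z₀, hz₀.le, by rw [h]; simpa [h] using hgz₀⟩
  refine ⟨((starRingEnd 𝕜) (g z₀) / (‖g z₀‖ : 𝕜)) • z₀, ?_, ?_⟩
  · rw [norm_smul, norm_div, RCLike.norm_conj, RCLike.norm_ofReal,
      abs_of_nonneg (norm_nonneg _), div_self (norm_ne_zero_iff.mpr h), one_mul]
    exact hz₀.le
  · have hne : (‖g z₀‖ : 𝕜) ≠ 0 := by
      simpa using norm_ne_zero_iff.mpr h
    rw [map_smul, smul_eq_mul, div_mul_eq_mul_div, RCLike.conj_mul]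
    rw [show ((‖g z₀‖ : ℝ) : 𝕜) ^ 2 / (‖g z₀‖ : 𝕜) = ((‖g z₀‖ : ℝ) : 𝕜) by
      rw [sq]; exact mul_div_cancel_right₀ _ hne]
    rwa [RCLike.ofReal_re]

private lemma eq_ofReal_of_re_eq_norm {𝕜 : Type*} [RCLike 𝕜] {w : 𝕜}
    (h : RCLike.re w = ‖w‖) : w = (‖w‖ : 𝕜) := by
  have hsq : ‖w‖ ^ 2 = RCLike.re w * RCLike.re w + RCLike.im w * RCLike.im w :=
    RCLike.norm_sq_eq_def
  have hp : ‖w‖ ^ 2 = ‖w‖ * ‖w‖ := sq ‖w‖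
  have h2 : RCLike.im w * RCLike.im w = 0 := by rw [h] at hsq; linarith
  have him : RCLike.im w = 0 := mul_self_eq_zero.mp h2
  apply RCLike.ext
  · rw [RCLike.ofReal_re, h]
  · rw [RCLike.ofReal_im, him]

set_option maxHeartbeats 1600000 in
/-- Bishop–Phelps–Bollobás. -/
private lemma bpb {𝕜 X : Type*} [RCLike 𝕜] [NormedAddCommGroup X] [NormedSpace 𝕜 X]
    [NormedSpace ℝ X] [IsScalarTower ℝ 𝕜 X] [CompleteSpace X]
    {f : X →L[𝕜] 𝕜} (hf : ‖f‖ ≤ 1) {x : X} (hx : ‖x‖ ≤ 1) {δ : ℝ} (hδ : 0 < δ)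
    (hδ1 : δ + Real.sqrt δ < 1) (hfx : 1 - δ < RCLike.re (f x)) :
    ∃ (y : X) (g : X →L[𝕜] 𝕜), ‖y‖ = 1 ∧ ‖g‖ = 1 ∧ g y = 1 ∧
      ‖x - y‖ ≤ Real.sqrt δ ∧ ‖f - g‖ ≤ δ + 2 * Real.sqrt δ := by
  set ε : ℝ := Real.sqrt δ with hεdef
  have hε : 0 < ε := Real.sqrt_pos.mpr hδ
  have hεsq : ε * ε = δ := Real.mul_self_sqrt hδ.le
  set ψ : X →L[ℝ] ℝ := (RCLike.reCLM : 𝕜 →L[ℝ] ℝ).comp (f.restrictScalars ℝ) with hψdef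
  have hψapp : ∀ z, ψ z = RCLike.re (f z) := fun z => rfl
  have hψbdd : ∀ z ∈ closedBall (0 : X) 1, ψ z ≤ 1 := by
    intro z hz
    rw [mem_closedBall_zero_iff] at hz
    calc ψ z ≤ ‖f z‖ := by rw [hψapp]; exact RCLike.re_le_norm _
    _ ≤ ‖f‖ * ‖z‖ := f.le_opNorm z
    _ ≤ 1 := by nlinarith [norm_nonneg f, norm_nonneg z]
  obtain ⟨y, hyK, h1, h2⟩ := ekeland_max (isClosed_closedBall) (fun z => ψ z) ψ.continuous hψbdd hε
    (mem_closedBall_zero_iff.mpr hx)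
  have hy1 : ‖y‖ ≤ 1 := mem_closedBall_zero_iff.mp hyK
  have hxy : ‖x - y‖ ≤ ε := by
    have h3 : ψ y ≤ 1 := hψbdd y hyK
    have h4 : 1 - δ < ψ x := hfx
    have h5 : ε * ‖y - x‖ ≤ δ := by linarith
    rw [← neg_sub, norm_neg]
    nlinarith
  obtain ⟨φ₁, hφ₁, hsubd⟩ := sep_step ψ hyK hε h2
  set h : X →L[𝕜] 𝕜 := φ₁.extendTo𝕜' with hhdef
  have hhnorm : ‖h‖ ≤ ε := le_trans (le_of_eq (φ₁.norm_extendTo𝕜')) hφ₁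
  have hhre : ∀ z, RCLike.re (h z) = φ₁ z := by
    intro z
    rw [hhdef]
    exact StrongDual.re_extendRCLike_apply (𝕜 := 𝕜) φ₁ z
  set g₀ : X →L[𝕜] 𝕜 := f - h with hg₀def
  have hg₀app : ∀ z, RCLike.re (g₀ z) = ψ z - φ₁ z := by
    intro z
    rw [hg₀def, ContinuousLinearMap.sub_apply, map_sub, hhre, hψapp]
  have hmono : ∀ z, ‖z‖ ≤ 1 → RCLike.re (g₀ z) ≤ RCLike.re (g₀ y) := by
    intro z hz
    rw [hg₀app, hg₀app]
    exact hsubd z (mem_closedBall_zero_iff.mpr hz)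
  have hnormle : ‖g₀‖ ≤ RCLike.re (g₀ y) := by
    refine le_of_forall_lt fun r hr => ?_
    obtain ⟨z, hz, hrz⟩ := rotate_re g₀ hr
    exact lt_of_lt_of_le hrz (hmono z hz)
  have hrele : RCLike.re (g₀ y) ≤ ‖g₀ y‖ := RCLike.re_le_norm _
  have hg₀y_le : ‖g₀ y‖ ≤ ‖g₀‖ := by
    calc ‖g₀ y‖ ≤ ‖g₀‖ * ‖y‖ := g₀.le_opNorm y
    _ ≤ ‖g₀‖ := by
        have := mul_le_mul_of_nonneg_left hy1 (norm_nonneg g₀)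
        linarith
  have heq : ‖g₀‖ = RCLike.re (g₀ y) := le_antisymm hnormle (by linarith)
  have hpos : 0 < RCLike.re (g₀ y) := by
    have h3 : RCLike.re (g₀ x) ≤ RCLike.re (g₀ y) := hmono x hx
    have h4 : RCLike.re (g₀ x) = ψ x - φ₁ x := hg₀app x
    have h5 : |φ₁ x| ≤ ε := by
      calc |φ₁ x| = ‖φ₁ x‖ := rfl
      _ ≤ ‖φ₁‖ * ‖x‖ := φ₁.le_opNorm x
      _ ≤ ε := by
          have := mul_le_mul hφ₁ hx (norm_nonneg x) hε.le
          linarith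
    have h6 : 1 - δ < ψ x := hfx
    linarith [abs_le.mp h5]
  have hyn : ‖y‖ = 1 := by
    have h3 : ‖g₀‖ ≤ ‖g₀‖ * ‖y‖ := by
      calc ‖g₀‖ ≤ RCLike.re (g₀ y) := hnormle
      _ ≤ ‖g₀ y‖ := hrele
      _ ≤ ‖g₀‖ * ‖y‖ := g₀.le_opNorm y
    have h4 : 0 < ‖g₀‖ := lt_of_lt_of_le hpos (by linarith)
    have h5 : ‖g₀‖ * 1 ≤ ‖g₀‖ * ‖y‖ := by linarith
    have h6 : 1 ≤ ‖y‖ := le_of_mul_le_mul_left h5 h4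
    linarith
  have hg₀n : 0 < ‖g₀‖ := by rw [heq]; exact hpos
  have hg₀yval : g₀ y = (‖g₀‖ : 𝕜) := by
    have h3 : RCLike.re (g₀ y) = ‖g₀ y‖ := le_antisymm hrele (by linarith)
    have h4 := eq_ofReal_of_re_eq_norm h3
    rw [h4]
    congr 1
    linarith
  set g : X →L[𝕜] 𝕜 := ((‖g₀‖ : 𝕜))⁻¹ • g₀ with hgdef
  have hg₀ne : ((‖g₀‖ : ℝ) : 𝕜) ≠ 0 := by
    simpa using ne_of_gt hg₀n
  have hgy : g y = 1 := by
    rw [hgdef, ContinuousLinearMap.smul_apply, hg₀yval, smul_eq_mul, inv_mul_cancel₀ hg₀ne]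
  have hgn : ‖g‖ = 1 := by
    rw [hgdef]
    rw [norm_smul ((‖g₀‖ : 𝕜))⁻¹ g₀]
    rw [norm_inv, RCLike.norm_ofReal, abs_of_pos hg₀n, inv_mul_cancel₀ (ne_of_gt hg₀n)]
  refine ⟨y, g, hyn, hgn, hgy, hxy.trans (le_refl ε), ?_⟩
  have hfg₀ : f - g₀ = h := by rw [hg₀def]; abel
  have hsplit : f - g = (f - g₀) + (g₀ - g) := by abel
  have hg₀g : ‖g₀ - g‖ = |‖g₀‖ - 1| := by
    have h3 : g₀ - g = ((1 : 𝕜) - ((‖g₀‖ : ℝ) : 𝕜)⁻¹) • g₀ := by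
      ext z
      rw [hgdef]
      simp only [ContinuousLinearMap.sub_apply, ContinuousLinearMap.smul_apply, smul_eq_mul]
      ring
    rw [h3, norm_smul ((1 : 𝕜) - ((‖g₀‖ : ℝ) : 𝕜)⁻¹) g₀]
    rw [show (1 : 𝕜) - ((‖g₀‖ : ℝ) : 𝕜)⁻¹ = (((1 - ‖g₀‖⁻¹ : ℝ) : 𝕜)) by push_cast; ring]
    rw [RCLike.norm_ofReal]
    rw [show |1 - ‖g₀‖⁻¹| * ‖g₀‖ = |(1 - ‖g₀‖⁻¹) * ‖g₀‖| by
      rw [abs_mul, abs_of_pos hg₀n]]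
    congr 1
    rw [sub_mul, one_mul, inv_mul_cancel₀ (ne_of_gt hg₀n)]
  have hg₀ub : ‖g₀‖ ≤ 1 + ε := by
    calc ‖g₀‖ = ‖f - h‖ := by rw [hg₀def]
    _ ≤ ‖f‖ + ‖h‖ := norm_sub_le _ _
    _ ≤ 1 + ε := add_le_add hf hhnorm
  have hg₀lb : 1 - δ - ε ≤ ‖g₀‖ := by
    have h3 : RCLike.re (g₀ x) ≤ ‖g₀‖ := by
      rw [heq]; exact hmono x hx
    have h4 : RCLike.re (g₀ x) = ψ x - φ₁ x := hg₀app x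
    have h5 : |φ₁ x| ≤ ε := by
      calc |φ₁ x| = ‖φ₁ x‖ := rfl
      _ ≤ ‖φ₁‖ * ‖x‖ := φ₁.le_opNorm x
      _ ≤ ε := by
          have := mul_le_mul hφ₁ hx (norm_nonneg x) hε.le
          linarith
    have h6 : 1 - δ < ψ x := hfx
    linarith [abs_le.mp h5]
  calc ‖f - g‖ ≤ ‖f - g₀‖ + ‖g₀ - g‖ := by rw [hsplit]; exact norm_add_le _ _
  _ ≤ ε + |‖g₀‖ - 1| := by
      rw [hfg₀, hg₀g]
      exact add_le_add_left hhnorm _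
  _ ≤ δ + 2 * ε := by
      have habs : |‖g₀‖ - 1| ≤ δ + ε := abs_le.mpr ⟨by linarith, by linarith⟩
      linarith

end Aux

/-- For every bounded linear operator `T` on a Banach space `X`,
`v(T) = inf_{δ>0} v_δ(T)`. -/
theorem numRadius_eq_sInf_numRadiusDelta {𝕜 X : Type*} [RCLike 𝕜] [NormedAddCommGroup X]
    [NormedSpace 𝕜 X] [CompleteSpace X] (T : X →L[𝕜] X) :
    numRadius 𝕜 T = sInf {r : ℝ | ∃ δ : ℝ, 0 < δ ∧
      r = numRadiusDeltaOn 𝕜 T (closedBall 0 1) (closedBall 0 1) δ} := by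
  letI : NormedSpace ℝ X := NormedSpace.restrictScalars ℝ 𝕜 X
  letI : IsScalarTower ℝ 𝕜 X := ⟨fun r k z => by
    rw [Algebra.smul_def r k, mul_smul]; rfl⟩
  set S : Set ℝ :=
    {r : ℝ | ∃ (x : X) (f : X →L[𝕜] 𝕜), ‖x‖ = 1 ∧ ‖f‖ = 1 ∧ f x = 1 ∧ r = ‖f (T x)‖} with hSdef
  have hSnum : numRadius 𝕜 T = sSup S := rfl
  set D : ℝ → Set ℝ := fun δ => {r : ℝ | ∃ x ∈ closedBall (0 : X) 1,
      ∃ f ∈ closedBall (0 : X →L[𝕜] 𝕜) 1, 1 - δ < RCLike.re (f x) ∧ r = ‖f (T x)‖} with hDdef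
  have hDnum : ∀ δ : ℝ,
      numRadiusDeltaOn 𝕜 T (closedBall 0 1) (closedBall 0 1) δ = sSup (D δ) := fun _ => rfl
  have hbound : ∀ (x : X) (f : X →L[𝕜] 𝕜), ‖x‖ ≤ 1 → ‖f‖ ≤ 1 → ‖f (T x)‖ ≤ ‖T‖ := by
    intro x f hx hf
    calc ‖f (T x)‖ ≤ ‖f‖ * ‖T x‖ := f.le_opNorm _
    _ ≤ ‖f‖ * (‖T‖ * ‖x‖) := mul_le_mul_of_nonneg_left (T.le_opNorm x) (norm_nonneg f)
    _ ≤ ‖T‖ := by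
        have h1 : ‖T‖ * ‖x‖ ≤ ‖T‖ * 1 := mul_le_mul_of_nonneg_left hx (norm_nonneg T)
        have h2 : ‖f‖ * (‖T‖ * ‖x‖) ≤ 1 * (‖T‖ * 1) :=
          mul_le_mul hf h1 (by positivity) zero_le_one
        linarith
  rcases subsingleton_or_nontrivial X with hsub | hnt
  · have hS : S = ∅ := by
      ext r
      simp only [hSdef, mem_setOf_eq, Set.mem_empty_iff_false, iff_false, not_exists]
      rintro x f ⟨hx, -⟩
      have hx0 : x = 0 := Subsingleton.elim x 0
      rw [hx0, norm_zero] at hx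
      norm_num at hx
    have hD : ∀ δ : ℝ, sSup (D δ) = 0 := by
      intro δ
      have hsub' : D δ ⊆ {0} := by
        rintro r ⟨x, -, f, -, -, rfl⟩
        have hx0 : x = 0 := Subsingleton.elim x 0
        simp [hx0]
      rcases Set.subset_singleton_iff_eq.mp hsub' with h | h
      · rw [h]; exact Real.sSup_empty
      · rw [h]; exact csSup_singleton 0
    have hset : {r : ℝ | ∃ δ : ℝ, 0 < δ ∧
        r = numRadiusDeltaOn 𝕜 T (closedBall 0 1) (closedBall 0 1) δ} = {0} := by
      ext r
      simp only [mem_setOf_eq, Set.mem_singleton_iff]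
      constructor
      · rintro ⟨δ, hδ, rfl⟩
        rw [hDnum, hD]
      · rintro rfl
        exact ⟨1, one_pos, by rw [hDnum, hD]⟩
    rw [hSnum, hS, hset, Real.sSup_empty, csInf_singleton]
  · obtain ⟨x₀', hx₀'⟩ := exists_ne (0 : X)
    set x₀ : X := ((‖x₀'‖ : ℝ) : 𝕜)⁻¹ • x₀' with hx₀def
    have hx₀n : ‖x₀‖ = 1 := by
      rw [hx₀def, norm_smul, norm_inv, RCLike.norm_ofReal,
        abs_of_pos (norm_pos_iff.mpr hx₀'), inv_mul_cancel₀ (norm_ne_zero_iff.mpr hx₀')]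
    obtain ⟨f₀, hf₀n, hf₀x⟩ := exists_dual_vector 𝕜 x₀
      (by rw [← norm_ne_zero_iff, hx₀n]; norm_num)
    have hf₀1 : f₀ x₀ = 1 := by rw [hf₀x, hx₀n, RCLike.ofReal_one]
    have hSne : S.Nonempty := ⟨‖f₀ (T x₀)‖, x₀, f₀, hx₀n, hf₀n, hf₀1, rfl⟩
    have hSb : BddAbove S := by
      refine ⟨‖T‖, ?_⟩
      rintro r ⟨x, f, hx, hf, -, rfl⟩
      exact hbound x f hx.le hf.le
    have hsubSD : ∀ δ : ℝ, 0 < δ → S ⊆ D δ := by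
      rintro δ hδ r ⟨x, f, hx, hf, hfx, rfl⟩
      refine ⟨x, mem_closedBall_zero_iff.mpr hx.le, f, mem_closedBall_zero_iff.mpr hf.le, ?_, rfl⟩
      rw [hfx, RCLike.one_re]
      linarith
    have hDbdd : ∀ δ : ℝ, BddAbove (D δ) := by
      intro δ
      refine ⟨‖T‖, ?_⟩
      rintro r ⟨x, hx, f, hf, -, rfl⟩
      exact hbound x f (mem_closedBall_zero_iff.mp hx) (mem_closedBall_zero_iff.mp hf)
    have hvle : ∀ δ : ℝ, 0 < δ → sSup S ≤ sSup (D δ) := fun δ hδ =>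
      csSup_le_csSup (hDbdd δ) hSne (hsubSD δ hδ)
    set I : Set ℝ := {r : ℝ | ∃ δ : ℝ, 0 < δ ∧
      r = numRadiusDeltaOn 𝕜 T (closedBall 0 1) (closedBall 0 1) δ} with hIdef
    have hIne : I.Nonempty := ⟨_, 1, one_pos, rfl⟩
    have hIlb : ∀ b ∈ I, sSup S ≤ b := by
      rintro b ⟨δ, hδ, rfl⟩
      rw [hDnum]
      exact hvle δ hδ
    rw [hSnum]
    refine le_antisymm (le_csInf hIne hIlb) ?_
    have key : ∀ η : ℝ, 0 < η → sInf I ≤ sSup S + η := by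
      intro η hη
      have hTpos : (0 : ℝ) < ‖T‖ + 1 := by positivity
      set m : ℝ := min (η / (‖T‖ + 1)) 1 with hmdef
      have hm0 : 0 < m := lt_min (div_pos hη hTpos) one_pos
      have hm1 : m ≤ 1 := min_le_right _ _
      have hmle : m * (‖T‖ + 1) ≤ η := by
        have h1 : m ≤ η / (‖T‖ + 1) := min_le_left _ _
        rw [← le_div_iff₀ hTpos]
        exact h1
      set δ : ℝ := (m / 4) ^ 2 with hδdef
      have hδ0 : 0 < δ := by positivity
      have hsq : Real.sqrt δ = m / 4 := by
        rw [hδdef, Real.sqrt_sq (by positivity)]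
      have hδ1 : δ + Real.sqrt δ < 1 := by
        rw [hsq, hδdef]
        nlinarith
      have helem : ∀ r ∈ D δ, r ≤ sSup S + η := by
        rintro r ⟨x, hx, f, hf, hfx, rfl⟩
        rw [mem_closedBall_zero_iff] at hx hf
        obtain ⟨y, g, hyn, hgn, hgy, hxy, hfg⟩ := bpb hf hx hδ0 hδ1 hfx
        have hgS : ‖g (T y)‖ ≤ sSup S := le_csSup hSb ⟨y, g, hyn, hgn, hgy, rfl⟩
        have e1 : ‖f (T x) - f (T y)‖ ≤ ‖T‖ * Real.sqrt δ := by
          have h2 : ‖T‖ * ‖x - y‖ ≤ ‖T‖ * Real.sqrt δ :=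
            mul_le_mul_of_nonneg_left hxy (norm_nonneg T)
          have h3 : ‖f‖ * (‖T‖ * ‖x - y‖) ≤ 1 * (‖T‖ * Real.sqrt δ) :=
            mul_le_mul hf h2 (by positivity) zero_le_one
          calc ‖f (T x) - f (T y)‖ = ‖f (T (x - y))‖ := by rw [← map_sub, ← map_sub]
          _ ≤ ‖f‖ * ‖T (x - y)‖ := f.le_opNorm _
          _ ≤ ‖f‖ * (‖T‖ * ‖x - y‖) := mul_le_mul_of_nonneg_left (T.le_opNorm _) (norm_nonneg f)
          _ ≤ ‖T‖ * Real.sqrt δ := by linarith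
        have e2 : ‖f (T y) - g (T y)‖ ≤ (δ + 2 * Real.sqrt δ) * ‖T‖ := by
          have h1 : ‖T y‖ ≤ ‖T‖ := by
            have := T.le_opNorm y
            rw [hyn, mul_one] at this
            exact this
          calc ‖f (T y) - g (T y)‖ = ‖(f - g) (T y)‖ := by
                rw [ContinuousLinearMap.sub_apply]
          _ ≤ ‖f - g‖ * ‖T y‖ := (f - g).le_opNorm _
          _ ≤ (δ + 2 * Real.sqrt δ) * ‖T‖ :=
              mul_le_mul hfg h1 (norm_nonneg _) (by positivity)
        have e3 : ‖f (T x)‖ ≤ ‖g (T y)‖ + ‖f (T x) - f (T y)‖ + ‖f (T y) - g (T y)‖ := by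
          calc ‖f (T x)‖ = ‖g (T y) + (f (T x) - f (T y)) + (f (T y) - g (T y))‖ := by
                congr 1
                ring
          _ ≤ ‖g (T y)‖ + ‖f (T x) - f (T y)‖ + ‖f (T y) - g (T y)‖ := norm_add₃_le
        have hδm : ‖T‖ * Real.sqrt δ + (δ + 2 * Real.sqrt δ) * ‖T‖ ≤ η := by
          rw [hsq, hδdef]
          nlinarith [norm_nonneg T, mul_nonneg (norm_nonneg T) hm0.le]
        linarith
      have hsupD : sSup (D δ) ≤ sSup S + η :=
        csSup_le (hSne.mono (hsubSD δ hδ0)) helem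
      calc sInf I ≤ sSup (D δ) := csInf_le ⟨sSup S, hIlb⟩ ⟨δ, hδ0, hDnum δ⟩
      _ ≤ sSup S + η := hsupD
    by_contra hcon
    push_neg at hcon
    have := key ((sInf I - sSup S) / 2) (by linarith)
    linarith
end

section
/- Let X₁, X₂ be Banach spaces and suppose there is a linear isometric embedding Φ : L(X₁) → L(X₂) with Φ(Id_{X₁}) = Id_{X₂}. Then n(X₂) ≤ n(X₁). -/
open Metric Set

open RCLike in

lemma diss_aux {𝕜 X : Type*} [RCLike 𝕜] [NormedAddCommGroup X] [NormedSpace 𝕜 X]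
    (S : X →L[𝕜] X) (v α : ℝ)
    (hv : ∀ (x : X) (f : X →L[𝕜] 𝕜), ‖x‖ = 1 → ‖f‖ = 1 → f x = 1 →
      RCLike.re (f (S x)) ≤ v)
    (hα : 0 ≤ α) (x : X) :
    ‖x‖ ≤ ‖x - (α : 𝕜) • (S x - (v : 𝕜) • x)‖ := by
  rcases eq_or_ne x 0 with rfl | hx
  · simp
  obtain ⟨f, hf1, hfx⟩ := exists_dual_vector 𝕜 x (norm_ne_zero_iff.mpr hx)
  have hxn : (0:ℝ) < ‖x‖ := norm_pos_iff.mpr hx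
  set x' : X := ((‖x‖⁻¹ : ℝ) : 𝕜) • x with hx'
  have hx'n : ‖x'‖ = 1 := by
    rw [hx', norm_smul]
    simp [norm_inv, inv_mul_cancel₀ hxn.ne']
  have hfx' : f x' = 1 := by
    rw [hx', map_smul, hfx, smul_eq_mul, ← RCLike.ofReal_mul, inv_mul_cancel₀ hxn.ne',
      RCLike.ofReal_one]
  have h1 : ‖x‖⁻¹ * re (f (S x)) ≤ v := by
    have h0 := hv x' f hx'n hf1 hfx'
    rw [hx', map_smul, map_smul, smul_eq_mul, re_ofReal_mul] at h0
    exact h0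
  have hre : re (f (S x)) ≤ v * ‖x‖ := by
    have h2 := mul_le_mul_of_nonneg_left h1 hxn.le
    rwa [← mul_assoc, mul_inv_cancel₀ hxn.ne', one_mul, mul_comm] at h2
  have hval : f (x - (α : 𝕜) • (S x - (v:𝕜) • x))
      = (‖x‖ : 𝕜) - (α:𝕜) * (f (S x) - (v:𝕜)*(‖x‖:𝕜)) := by
    simp [map_sub, map_smul, hfx, smul_eq_mul]
  have hre2 : ‖x‖ ≤ re (f (x - (α : 𝕜) • (S x - (v:𝕜) • x))) := by
    rw [hval, map_sub, re_ofReal_mul, map_sub]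
    have : re ((v:𝕜) * (‖x‖:𝕜)) = v * ‖x‖ := by rw [← RCLike.ofReal_mul]; simp
    rw [this, RCLike.ofReal_re]
    nlinarith [hre, hα]
  calc ‖x‖ ≤ re (f (x - (α : 𝕜) • (S x - (v:𝕜) • x))) := hre2
    _ ≤ ‖f (x - (α : 𝕜) • (S x - (v:𝕜) • x))‖ := RCLike.re_le_norm _
    _ ≤ ‖f‖ * ‖x - (α : 𝕜) • (S x - (v:𝕜) • x)‖ := f.le_opNorm _
    _ = _ := by rw [hf1, one_mul]


open RCLike in
lemma norm_one_add_smul_le {𝕜 X : Type*} [RCLike 𝕜] [NormedAddCommGroup X] [NormedSpace 𝕜 X]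
    [CompleteSpace X] (S : X →L[𝕜] X) (v α : ℝ) (hv0 : 0 ≤ v)
    (hv : ∀ (x : X) (f : X →L[𝕜] 𝕜), ‖x‖ = 1 → ‖f‖ = 1 → f x = 1 →
      RCLike.re (f (S x)) ≤ v)
    (hα : 0 < α) (hα1 : α * (‖S‖ + v) < 1) :
    ‖(1 : X →L[𝕜] X) + (α : 𝕜) • S‖ ≤ 1 + α * v + α ^ 2 * (‖S‖ + v) ^ 2 := by
  set S' : X →L[𝕜] X := S - (v : 𝕜) • 1 with hS'def
  have hnorm1 : ‖(1 : X →L[𝕜] X)‖ ≤ 1 := ContinuousLinearMap.norm_id_le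
  have hS'n : ‖S'‖ ≤ ‖S‖ + v := by
    calc ‖S'‖ ≤ ‖S‖ + ‖(v:𝕜) • (1 : X →L[𝕜] X)‖ := norm_sub_le _ _
      _ ≤ ‖S‖ + v := by
          have h := ContinuousLinearMap.opNorm_smul_le (v:𝕜) (1 : X →L[𝕜] X)
          rw [RCLike.norm_ofReal, abs_of_nonneg hv0] at h
          nlinarith [hnorm1, norm_nonneg (1 : X →L[𝕜] X)]
  set u : X →L[𝕜] X := (α : 𝕜) • S' with hudef
  have hun : ‖u‖ ≤ α * (‖S‖ + v) := by
    have h := ContinuousLinearMap.opNorm_smul_le (α:𝕜) S'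
    rw [RCLike.norm_ofReal, abs_of_nonneg hα.le] at h
    exact le_trans h (mul_le_mul_of_nonneg_left hS'n hα.le)
  have hu1 : ‖u‖ < 1 := lt_of_le_of_lt hun hα1
  set W : (X →L[𝕜] X)ˣ := Units.oneSub u hu1 with hWdef
  have hWval : (W : X →L[𝕜] X) = 1 - u := rfl
  have hdiss : ∀ x : X, ‖x‖ ≤ ‖(1 - u) x‖ := by
    intro x
    have happ : (1 - u) x = x - (α : 𝕜) • (S x - (v : 𝕜) • x) := by
      simp [hudef, hS'def, ContinuousLinearMap.sub_apply, ContinuousLinearMap.smul_apply,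
        ContinuousLinearMap.one_apply, smul_sub]
    rw [happ]
    exact diss_aux S v α hv hα.le x
  have hWinv : ‖(↑W⁻¹ : X →L[𝕜] X)‖ ≤ 1 := by
    apply ContinuousLinearMap.opNorm_le_bound _ zero_le_one
    intro z
    rw [one_mul]
    calc ‖(↑W⁻¹ : X →L[𝕜] X) z‖ ≤ ‖(1 - u) ((↑W⁻¹ : X →L[𝕜] X) z)‖ := hdiss _
      _ = ‖((1 - u) * (↑W⁻¹ : X →L[𝕜] X)) z‖ := by rw [ContinuousLinearMap.mul_apply]
      _ = ‖z‖ := by rw [← hWval, W.mul_inv]; simp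
  have hfact : (1 + u) = (↑W⁻¹ : X →L[𝕜] X) * (1 - u * u) := by
    have h2 : (1 - u * u) = (1 - u) * (1 + u) := by noncomm_ring
    rw [h2, ← hWval, ← mul_assoc, W.inv_mul, one_mul]
  have h1u : ‖1 + u‖ ≤ 1 + (α * (‖S‖ + v)) ^ 2 := by
    rw [hfact]
    calc ‖(↑W⁻¹ : X →L[𝕜] X) * (1 - u * u)‖ ≤ ‖(↑W⁻¹ : X →L[𝕜] X)‖ * ‖1 - u * u‖ :=
          norm_mul_le _ _
      _ ≤ 1 * (‖(1 : X →L[𝕜] X)‖ + ‖u‖ * ‖u‖) := by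
          apply mul_le_mul hWinv _ (norm_nonneg _) zero_le_one
          exact le_trans (norm_sub_le _ _) (by gcongr; exact norm_mul_le _ _)
      _ ≤ 1 + (α * (‖S‖ + v)) ^ 2 := by
          rw [one_mul, pow_two]
          have hun0 : (0:ℝ) ≤ ‖u‖ := norm_nonneg _
          nlinarith [hnorm1, hun]
  have hdecomp : (1 : X →L[𝕜] X) + (α : 𝕜) • S = (1 + u) + ((α * v : ℝ) : 𝕜) • 1 := by
    rw [hudef, hS'def]
    rw [smul_sub, RCLike.ofReal_mul, smul_smul]
    abel
  rw [hdecomp]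
  calc ‖(1 + u) + ((α * v : ℝ) : 𝕜) • (1 : X →L[𝕜] X)‖
      ≤ ‖1 + u‖ + ‖((α * v : ℝ) : 𝕜) • (1 : X →L[𝕜] X)‖ := norm_add_le _ _
    _ ≤ (1 + (α * (‖S‖ + v)) ^ 2) + α * v := by
        gcongr
        have h := ContinuousLinearMap.opNorm_smul_le ((α * v : ℝ) : 𝕜) (1 : X →L[𝕜] X)
        rw [RCLike.norm_ofReal, abs_of_nonneg (by positivity : (0:ℝ) ≤ α * v)] at h
        nlinarith [hnorm1, mul_nonneg hα.le hv0, norm_nonneg (1 : X →L[𝕜] X), h]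
    _ ≤ 1 + α * v + α ^ 2 * (‖S‖ + v) ^ 2 := by nlinarith [sq_nonneg (α * (‖S‖+v))]


lemma numRadius_mem_le {𝕜 X : Type*} [RCLike 𝕜] [NormedAddCommGroup X] [NormedSpace 𝕜 X]
    (T : X →L[𝕜] X) :
    ∀ r ∈ {r : ℝ | ∃ (x : X) (f : X →L[𝕜] 𝕜), ‖x‖ = 1 ∧ ‖f‖ = 1 ∧ f x = 1 ∧ r = ‖f (T x)‖},
      r ≤ ‖T‖ := by
  rintro r ⟨x, f, hx, hf, -, rfl⟩
  calc ‖f (T x)‖ ≤ ‖f‖ * ‖T x‖ := f.le_opNorm _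
    _ ≤ 1 * (‖T‖ * ‖x‖) := by rw [hf]; gcongr; exact T.le_opNorm _
    _ = ‖T‖ := by rw [hx]; ring

lemma numRadius_nonneg {𝕜 X : Type*} [RCLike 𝕜] [NormedAddCommGroup X] [NormedSpace 𝕜 X]
    (T : X →L[𝕜] X) : 0 ≤ numRadius 𝕜 T :=
  Real.sSup_nonneg fun r hr => by obtain ⟨x, f, -, -, -, rfl⟩ := hr; exact norm_nonneg _

lemma numRadius_le_norm {𝕜 X : Type*} [RCLike 𝕜] [NormedAddCommGroup X] [NormedSpace 𝕜 X]
    (T : X →L[𝕜] X) : numRadius 𝕜 T ≤ ‖T‖ :=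
  Real.sSup_le (numRadius_mem_le T) (norm_nonneg T)


/-- If there is a linear isometric embedding `L(X₁) → L(X₂)` carrying the
identity to the identity, then `n(X₂) ≤ n(X₁)`. -/
theorem numIndex_le_of_unital_isometric_embedding {𝕜 X₁ X₂ : Type*} [RCLike 𝕜]
    [NormedAddCommGroup X₁] [NormedSpace 𝕜 X₁] [CompleteSpace X₁]
    [NormedAddCommGroup X₂] [NormedSpace 𝕜 X₂] [CompleteSpace X₂]
    (Φ : (X₁ →L[𝕜] X₁) →ₗᵢ[𝕜] (X₂ →L[𝕜] X₂))
    (hΦ : Φ (ContinuousLinearMap.id 𝕜 X₁) = ContinuousLinearMap.id 𝕜 X₂) :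
    numIndex 𝕜 X₂ ≤ numIndex 𝕜 X₁ := by
  rcases subsingleton_or_nontrivial X₁ with hX1 | hX1
  · -- degenerate case : both spaces are trivial
    have hid : (ContinuousLinearMap.id 𝕜 X₂) = 0 := by
      rw [← hΦ, Subsingleton.elim (ContinuousLinearMap.id 𝕜 X₁) 0, map_zero]
    have hX2 : Subsingleton X₂ := by
      constructor
      intro a b
      have ha : a = 0 := by
        calc a = ContinuousLinearMap.id 𝕜 X₂ a := rfl
          _ = (0 : X₂ →L[𝕜] X₂) a := by rw [hid]
          _ = 0 := rfl
      have hb : b = 0 := by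
        calc b = ContinuousLinearMap.id 𝕜 X₂ b := rfl
          _ = (0 : X₂ →L[𝕜] X₂) b := by rw [hid]
          _ = 0 := rfl
      rw [ha, hb]
    have e1 : {r : ℝ | ∃ T : X₁ →L[𝕜] X₁, ‖T‖ = 1 ∧ r = numRadius 𝕜 T} = ∅ := by
      ext r
      simp only [mem_setOf_eq, mem_empty_iff_false, iff_false, not_exists]
      rintro T ⟨hT, -⟩
      rw [Subsingleton.elim T 0, norm_zero] at hT
      exact zero_ne_one hT
    have e2 : {r : ℝ | ∃ T : X₂ →L[𝕜] X₂, ‖T‖ = 1 ∧ r = numRadius 𝕜 T} = ∅ := by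
      ext r
      simp only [mem_setOf_eq, mem_empty_iff_false, iff_false, not_exists]
      rintro T ⟨hT, -⟩
      rw [Subsingleton.elim T 0, norm_zero] at hT
      exact zero_ne_one hT
    simp only [numIndex, e1, e2, le_refl]
  · -- main case
    simp only [numIndex]
    apply le_csInf
    · exact ⟨numRadius 𝕜 (ContinuousLinearMap.id 𝕜 X₁),
        ContinuousLinearMap.id 𝕜 X₁, ContinuousLinearMap.norm_id, rfl⟩
    rintro r ⟨T, hT, rfl⟩
    have hΦT : ‖Φ T‖ = 1 := by rw [Φ.norm_map]; exact hT
    have bddb : BddBelow {r : ℝ | ∃ T' : X₂ →L[𝕜] X₂, ‖T'‖ = 1 ∧ r = numRadius 𝕜 T'} := by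
      refine ⟨0, ?_⟩
      rintro r ⟨T', -, rfl⟩
      exact numRadius_nonneg T'
    refine le_trans (csInf_le bddb ⟨Φ T, hΦT, rfl⟩) ?_
    -- numRadius (Φ T) ≤ numRadius T
    set v : ℝ := numRadius 𝕜 T with hvdef
    have hv0 : 0 ≤ v := numRadius_nonneg T
    have hv1 : v ≤ 1 := by rw [hvdef, ← hT]; exact numRadius_le_norm T
    apply Real.sSup_le _ hv0
    rintro r ⟨y, g, hy, hg, hgy, rfl⟩
    set c : 𝕜 := g ((Φ T) y) with hcdef
    rcases eq_or_ne c 0 with hc0 | hc0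
    · rw [hc0, norm_zero]; exact hv0
    have hcn : (0:ℝ) < ‖c‖ := norm_pos_iff.mpr hc0
    set lam : 𝕜 := starRingEnd 𝕜 c / (‖c‖ : 𝕜) with hlamdef
    have hcK : ((‖c‖ : ℝ) : 𝕜) ≠ 0 := by
      simpa using hcn.ne'
    have hlamc : lam * c = (‖c‖ : 𝕜) := by
      rw [hlamdef, div_mul_eq_mul_div, RCLike.conj_mul, pow_two, mul_div_assoc,
        div_self hcK, mul_one]
    have hlam : ‖lam‖ = 1 := by
      rw [hlamdef, norm_div, RCLike.norm_conj, RCLike.norm_ofReal, abs_of_nonneg hcn.le,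
        div_self hcn.ne']
    set S : X₁ →L[𝕜] X₁ := lam • T with hSdef
    have hSn : ‖S‖ ≤ 1 := by
      have h := ContinuousLinearMap.opNorm_smul_le lam T
      rwa [hlam, one_mul, hT] at h
    have hvS : ∀ (x : X₁) (f : X₁ →L[𝕜] 𝕜), ‖x‖ = 1 → ‖f‖ = 1 → f x = 1 →
        RCLike.re (f (S x)) ≤ v := by
      intro x f hx hf hfx
      have hfS : f (S x) = lam * f (T x) := by
        rw [hSdef]; simp [ContinuousLinearMap.smul_apply]
      calc RCLike.re (f (S x)) ≤ ‖f (S x)‖ := RCLike.re_le_norm _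
        _ = ‖f (T x)‖ := by rw [hfS, norm_mul, hlam, one_mul]
        _ ≤ v := le_csSup ⟨‖T‖, numRadius_mem_le T⟩ ⟨x, f, hx, hf, hfx, rfl⟩
    -- key inequality for all small positive α
    have key : ∀ α : ℝ, 0 < α → α ≤ 4⁻¹ → ‖c‖ ≤ v + α * 4 := by
      intro α hα hα4
      have h2 : ‖S‖ + v ≤ 2 := by nlinarith
      have hα1 : α * (‖S‖ + v) < 1 := by nlinarith [norm_nonneg S]
      have main := norm_one_add_smul_le S v α hv0 hvS hα hα1
      -- lower bound via Φ and the pair (y, g)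
      have hΦ1 : Φ (1 : X₁ →L[𝕜] X₁) = (1 : X₂ →L[𝕜] X₂) := by
        rw [ContinuousLinearMap.one_def, ContinuousLinearMap.one_def, hΦ]
      have hΦeq : Φ ((1 : X₁ →L[𝕜] X₁) + (α : 𝕜) • S)
          = (1 : X₂ →L[𝕜] X₂) + (α : 𝕜) • (lam • Φ T) := by
        rw [map_add, map_smul, hΦ1, hSdef, map_smul]
      have hval : g ((Φ ((1 : X₁ →L[𝕜] X₁) + (α : 𝕜) • S)) y)
          = 1 + (α : 𝕜) * (‖c‖ : 𝕜) := by
        rw [hΦeq]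
        simp only [ContinuousLinearMap.add_apply, ContinuousLinearMap.smul_apply,
          ContinuousLinearMap.one_apply, map_add, map_smul, smul_eq_mul, hgy, ← hcdef]
        rw [hlamc]
      have hlow : 1 + α * ‖c‖ ≤ ‖(1 : X₁ →L[𝕜] X₁) + (α : 𝕜) • S‖ := by
        have hre : RCLike.re (g ((Φ ((1 : X₁ →L[𝕜] X₁) + (α : 𝕜) • S)) y))
            = 1 + α * ‖c‖ := by
          rw [hval, map_add, RCLike.one_re, ← RCLike.ofReal_mul, RCLike.ofReal_re]
        calc 1 + α * ‖c‖
            = RCLike.re (g ((Φ ((1 : X₁ →L[𝕜] X₁) + (α : 𝕜) • S)) y)) := hre.symm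
          _ ≤ ‖g ((Φ ((1 : X₁ →L[𝕜] X₁) + (α : 𝕜) • S)) y)‖ := RCLike.re_le_norm _
          _ ≤ ‖g‖ * ‖(Φ ((1 : X₁ →L[𝕜] X₁) + (α : 𝕜) • S)) y‖ := g.le_opNorm _
          _ ≤ 1 * (‖Φ ((1 : X₁ →L[𝕜] X₁) + (α : 𝕜) • S)‖ * ‖y‖) := by
              rw [hg]; gcongr; exact (Φ _).le_opNorm _
          _ = ‖(1 : X₁ →L[𝕜] X₁) + (α : 𝕜) • S‖ := by
              rw [Φ.norm_map, hy]; ring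
      have hsq : (‖S‖ + v) ^ 2 ≤ 4 := by nlinarith [norm_nonneg S]
      nlinarith [hlow, main, sq_nonneg α, mul_le_mul_of_nonneg_left hsq (sq_nonneg α)]
    -- conclude by letting α → 0
    apply le_of_forall_pos_le_add
    intro ε hε
    have h4 : (0:ℝ) < 4⁻¹ := by norm_num
    set α : ℝ := min (ε / 4) 4⁻¹ with hαdef
    have hαpos : 0 < α := lt_min (by positivity) h4
    have := key α hαpos (min_le_right _ _)
    have hε4 : α * 4 ≤ ε := by
      have : α ≤ ε / 4 := min_le_left _ _
      nlinarith
    linarith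
end

section
/- For any Banach spaces X and Y, n(K_{w*}(X*,Y)) ≤ min{ n(X), n(Y) }, where K_{w*}(X*,Y) is the space of compact weak*-to-weak continuous operators from X* to Y. -/
open Metric Set

namespace Stmt7

variable {𝕜 : Type*} [RCLike 𝕜]

lemma mem_vset_le {X : Type*} [NormedAddCommGroup X] [NormedSpace 𝕜 X]
    {T : X →L[𝕜] X} {r : ℝ}
    (hr : r ∈ {r : ℝ | ∃ (x : X) (f : X →L[𝕜] 𝕜), ‖x‖ = 1 ∧ ‖f‖ = 1 ∧ f x = 1 ∧ r = ‖f (T x)‖}) :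
    r ≤ ‖T‖ := by
  obtain ⟨x, f, hx, hf, hfx, rfl⟩ := hr
  calc ‖f (T x)‖ ≤ ‖f‖ * ‖T x‖ := f.le_opNorm _
    _ ≤ 1 * (‖T‖ * ‖x‖) := by rw [hf]; gcongr; exact T.le_opNorm x
    _ = ‖T‖ := by rw [hx]; ring

lemma numRadius_nonneg {X : Type*} [NormedAddCommGroup X] [NormedSpace 𝕜 X]
    (T : X →L[𝕜] X) : 0 ≤ numRadius 𝕜 T := by
  apply Real.sSup_nonneg
  rintro r ⟨x, f, hx, hf, hfx, rfl⟩
  exact norm_nonneg _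

lemma numIndex_nonneg (X : Type*) [NormedAddCommGroup X] [NormedSpace 𝕜 X] :
    0 ≤ numIndex 𝕜 X := by
  apply Real.sInf_nonneg
  rintro r ⟨T, hT, rfl⟩
  exact numRadius_nonneg T

lemma numIndex_subsingleton (W : Type*) [NormedAddCommGroup W] [NormedSpace 𝕜 W]
    [Subsingleton W] : numIndex 𝕜 W = 0 := by
  have hempty : {r : ℝ | ∃ T : W →L[𝕜] W, ‖T‖ = 1 ∧ r = numRadius 𝕜 T} = ∅ := by
    ext r
    simp only [mem_setOf_eq, mem_empty_iff_false, iff_false, not_exists]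
    rintro T ⟨hT, -⟩
    have hT0 : T = 0 := Subsingleton.elim _ _
    rw [hT0, norm_zero] at hT
    exact one_ne_zero hT.symm
  rw [numIndex, hempty, Real.sInf_empty]

lemma numIndex_le_numRadius {W : Type*} [NormedAddCommGroup W] [NormedSpace 𝕜 W]
    (T : W →L[𝕜] W) (hT : ‖T‖ = 1) : numIndex 𝕜 W ≤ numRadius 𝕜 T := by
  apply csInf_le
  · refine ⟨0, ?_⟩
    rintro r ⟨T', -, rfl⟩
    exact numRadius_nonneg T'
  · exact ⟨T, hT, rfl⟩

/-- Key lemma: if `‖Id + c • Φ‖ ≤ ‖Id + c • S‖` for all scalars `c`, then the numerical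
radius of `Φ` is at most that of `S`. -/
lemma numRadius_le_of_norm_id_add_le {W V : Type*}
    [NormedAddCommGroup W] [NormedSpace 𝕜 W]
    [NormedAddCommGroup V] [NormedSpace 𝕜 V]
    (Φ : W →L[𝕜] W) (S : V →L[𝕜] V)
    (h : ∀ c : 𝕜, ‖ContinuousLinearMap.id 𝕜 W + c • Φ‖ ≤ ‖ContinuousLinearMap.id 𝕜 V + c • S‖) :
    numRadius 𝕜 Φ ≤ numRadius 𝕜 S := by
  set w := numRadius 𝕜 S with hw
  have hw0 : 0 ≤ w := numRadius_nonneg S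
  have hstate : ∀ (x : V) (f : V →L[𝕜] 𝕜), ‖x‖ = 1 → ‖f‖ = 1 → f x = 1 → ‖f (S x)‖ ≤ w := by
    intro x f hx hf hfx
    exact le_csSup ⟨‖S‖, fun r hr => mem_vset_le hr⟩ ⟨x, f, hx, hf, hfx, rfl⟩
  apply Real.sSup_le _ hw0
  rintro r ⟨T, φ, hT, hφ, hφT, rfl⟩
  set c := φ (Φ T) with hc
  rcases eq_or_ne c 0 with h0 | h0
  · rw [h0, norm_zero]; exact hw0
  set lam : 𝕜 := (‖c‖ : 𝕜) * c⁻¹ with hlam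
  have hlam1 : ‖lam‖ = 1 := by
    rw [hlam, norm_mul, norm_inv, RCLike.norm_ofReal, abs_of_nonneg (norm_nonneg c)]
    exact mul_inv_cancel₀ (norm_ne_zero_iff.mpr h0)
  have hlamc : lam * c = (‖c‖ : 𝕜) := by
    rw [hlam]; field_simp
  -- the dissipative operator A
  set A : V →L[𝕜] V := lam • S - (w : 𝕜) • ContinuousLinearMap.id 𝕜 V with hA
  have hdiss : ∀ (x : V) (f : V →L[𝕜] 𝕜), ‖x‖ = 1 → ‖f‖ = 1 → f x = 1 →
      RCLike.re (f (A x)) ≤ 0 := by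
    intro x f hx hf hfx
    have : f (A x) = lam * f (S x) - (w : 𝕜) := by
      simp [hA, hfx, ContinuousLinearMap.sub_apply, ContinuousLinearMap.smul_apply,
        map_smul, smul_eq_mul]
    rw [this, map_sub, RCLike.ofReal_re]
    have h1 : RCLike.re (lam * f (S x)) ≤ ‖lam * f (S x)‖ := RCLike.re_le_norm _
    have h2 : ‖lam * f (S x)‖ = ‖f (S x)‖ := by rw [norm_mul, hlam1, one_mul]
    linarith [hstate x f hx hf hfx]
  -- Lumer-Phillips: ‖v‖ ≤ ‖v - t • A v‖ for t ≥ 0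
  have hLP : ∀ t : ℝ, 0 ≤ t → ∀ v : V, ‖v‖ ≤ ‖v - (t : 𝕜) • A v‖ := by
    intro t ht v
    rcases eq_or_ne v 0 with rfl | hv
    · simp
    obtain ⟨f, hf1, hfv⟩ := exists_dual_vector 𝕜 v (norm_ne_zero_iff.mpr hv)
    have hnv : (‖v‖ : ℝ) ≠ 0 := norm_ne_zero_iff.mpr hv
    set x : V := ((‖v‖ : 𝕜))⁻¹ • v with hx
    have hx1 : ‖x‖ = 1 := by
      rw [hx, norm_smul, norm_inv, RCLike.norm_ofReal, abs_of_nonneg (norm_nonneg v)]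
      field_simp
    have hfx : f x = 1 := by
      rw [hx, map_smul, smul_eq_mul, hfv]
      exact inv_mul_cancel₀ (by exact_mod_cast hnv)
    have hre : RCLike.re (f (A v)) ≤ 0 := by
      have hv' : v = (‖v‖ : 𝕜) • x := by
        rw [hx, smul_smul]
        rw [mul_inv_cancel₀ (by exact_mod_cast hnv), one_smul]
      have : f (A v) = (‖v‖ : 𝕜) * f (A x) := by
        conv_lhs => rw [hv']
        rw [map_smul, map_smul, smul_eq_mul]
      rw [this, RCLike.re_ofReal_mul]
      exact mul_nonpos_of_nonneg_of_nonpos (norm_nonneg v) (hdiss x f hx1 hf1 hfx)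
    have key : (‖v‖ : ℝ) = RCLike.re (f v) := by rw [hfv, RCLike.ofReal_re]
    have : RCLike.re (f (v - (t : 𝕜) • A v)) = RCLike.re (f v) - t * RCLike.re (f (A v)) := by
      rw [map_sub, map_smul, map_sub]
      have : RCLike.re ((t : 𝕜) • f (A v)) = t * RCLike.re (f (A v)) := by
        rw [smul_eq_mul, RCLike.re_ofReal_mul]
      rw [this]
    calc ‖v‖ = RCLike.re (f v) := key
      _ ≤ RCLike.re (f v) - t * RCLike.re (f (A v)) := by nlinarith
      _ = RCLike.re (f (v - (t : 𝕜) • A v)) := this.symm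
      _ ≤ ‖f (v - (t : 𝕜) • A v)‖ := RCLike.re_le_norm _
      _ ≤ ‖f‖ * ‖v - (t : 𝕜) • A v‖ := f.le_opNorm _
      _ = ‖v - (t : 𝕜) • A v‖ := by rw [hf1, one_mul]
  -- norm bound on Id + t lam S
  have hnormS : ∀ t : ℝ, 0 ≤ t →
      ‖ContinuousLinearMap.id 𝕜 V + ((t : 𝕜) * lam) • S‖ ≤ 1 + t * w + t ^ 2 * ‖A‖ ^ 2 := by
    intro t ht
    apply ContinuousLinearMap.opNorm_le_bound _ (by positivity)
    intro v
    have hdecomp : v + ((t : 𝕜) * lam) • S v = (v + (t : 𝕜) • A v) + ((t * w : ℝ) : 𝕜) • v := by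
      simp only [hA, ContinuousLinearMap.sub_apply, ContinuousLinearMap.smul_apply,
        ContinuousLinearMap.id_apply, smul_sub, smul_smul, RCLike.ofReal_mul]
      module
    have hLP2 : ‖v + (t : 𝕜) • A v‖ ≤ ‖v‖ + t ^ 2 * ‖A‖ ^ 2 * ‖v‖ := by
      have h1 : ‖v + (t : 𝕜) • A v‖ ≤ ‖(v + (t : 𝕜) • A v) - (t : 𝕜) • A (v + (t : 𝕜) • A v)‖ :=
        hLP t ht _
      have h2 : (v + (t : 𝕜) • A v) - (t : 𝕜) • A (v + (t : 𝕜) • A v)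
          = v - ((t : 𝕜) * (t : 𝕜)) • A (A v) := by
        rw [map_add, map_smul]
        module
      rw [h2] at h1
      calc ‖v + (t : 𝕜) • A v‖ ≤ ‖v - ((t : 𝕜) * (t : 𝕜)) • A (A v)‖ := h1
        _ ≤ ‖v‖ + ‖((t : 𝕜) * (t : 𝕜)) • A (A v)‖ := norm_sub_le _ _
        _ ≤ ‖v‖ + t ^ 2 * ‖A‖ ^ 2 * ‖v‖ := by
            gcongr
            rw [norm_smul, norm_mul, RCLike.norm_ofReal, abs_of_nonneg ht]
            calc t * t * ‖A (A v)‖ ≤ t * t * (‖A‖ * (‖A‖ * ‖v‖)) := by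
                  gcongr
                  calc ‖A (A v)‖ ≤ ‖A‖ * ‖A v‖ := A.le_opNorm _
                    _ ≤ ‖A‖ * (‖A‖ * ‖v‖) := by gcongr; exact A.le_opNorm v
              _ = t ^ 2 * ‖A‖ ^ 2 * ‖v‖ := by ring
    calc ‖(ContinuousLinearMap.id 𝕜 V + ((t : 𝕜) * lam) • S) v‖
        = ‖(v + (t : 𝕜) • A v) + ((t * w : ℝ) : 𝕜) • v‖ := by
          rw [← hdecomp]; rfl
      _ ≤ ‖v + (t : 𝕜) • A v‖ + ‖((t * w : ℝ) : 𝕜) • v‖ := norm_add_le _ _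
      _ ≤ (‖v‖ + t ^ 2 * ‖A‖ ^ 2 * ‖v‖) + (t * w) * ‖v‖ := by
          gcongr
          rw [norm_smul, RCLike.norm_ofReal, abs_of_nonneg (by positivity)]
      _ = (1 + t * w + t ^ 2 * ‖A‖ ^ 2) * ‖v‖ := by ring
  -- main estimate: for all t > 0, ‖c‖ ≤ w + t * ‖A‖^2
  have hmain : ∀ t : ℝ, 0 < t → ‖c‖ ≤ w + t * ‖A‖ ^ 2 := by
    intro t ht
    have h1 : φ ((ContinuousLinearMap.id 𝕜 W + ((t : 𝕜) * lam) • Φ) T)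
        = ((1 + t * ‖c‖ : ℝ) : 𝕜) := by
      simp only [ContinuousLinearMap.add_apply, ContinuousLinearMap.smul_apply,
        ContinuousLinearMap.id_apply, map_add, map_smul, hφT, smul_eq_mul, ← hc]
      rw [mul_assoc, hlamc]
      push_cast
      ring
    have h2 : (1 + t * ‖c‖ : ℝ) ≤ ‖ContinuousLinearMap.id 𝕜 W + ((t : 𝕜) * lam) • Φ‖ := by
      have := ContinuousLinearMap.le_opNorm
        (ContinuousLinearMap.id 𝕜 W + ((t : 𝕜) * lam) • Φ) T
      rw [hT, mul_one] at this
      calc (1 + t * ‖c‖ : ℝ) = ‖((1 + t * ‖c‖ : ℝ) : 𝕜)‖ := by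
            rw [RCLike.norm_ofReal, abs_of_nonneg (by positivity)]
        _ = ‖φ ((ContinuousLinearMap.id 𝕜 W + ((t : 𝕜) * lam) • Φ) T)‖ := by rw [h1]
        _ ≤ ‖φ‖ * ‖(ContinuousLinearMap.id 𝕜 W + ((t : 𝕜) * lam) • Φ) T‖ := φ.le_opNorm _
        _ ≤ ‖ContinuousLinearMap.id 𝕜 W + ((t : 𝕜) * lam) • Φ‖ := by rw [hφ, one_mul]; exact this
    have h3 := h ((t : 𝕜) * lam)
    have h4 := hnormS t ht.le
    have : (1 + t * ‖c‖ : ℝ) ≤ 1 + t * w + t ^ 2 * ‖A‖ ^ 2 := le_trans h2 (le_trans h3 h4)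
    nlinarith
  -- conclude
  by_contra hcon
  push_neg at hcon
  have hden : (0 : ℝ) < ‖A‖ ^ 2 + 1 := by positivity
  have ht : 0 < (‖c‖ - w) / (‖A‖ ^ 2 + 1) := by
    apply div_pos _ hden
    linarith
  have h5 := hmain _ ht
  have h6 : (‖c‖ - w) / (‖A‖ ^ 2 + 1) * ‖A‖ ^ 2 < ‖c‖ - w := by
    rw [div_mul_eq_mul_div, div_lt_iff₀ hden]
    nlinarith [sq_nonneg ‖A‖]
  linarith

open NormedSpace ContinuousLinearMap

variable {X Y : Type*} [NormedAddCommGroup X] [NormedSpace 𝕜 X]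
  [NormedAddCommGroup Y] [NormedSpace 𝕜 Y]

/-- Precomposition with `S` as an operator on the dual. -/
noncomputable def precompDual (S : X →L[𝕜] X) : StrongDual 𝕜 X →L[𝕜] StrongDual 𝕜 X :=
  LinearMap.mkContinuous
    { toFun := fun f => f.comp S
      map_add' := fun f g => by ext; simp
      map_smul' := fun c f => by ext; simp }
    ‖S‖ (fun f => by
      simpa [mul_comm] using ContinuousLinearMap.opNorm_comp_le f S)

@[simp] lemma precompDual_apply (S : X →L[𝕜] X) (f : StrongDual 𝕜 X) :
    precompDual S f = f.comp S := rfl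

lemma precompDual_norm_le (S : X →L[𝕜] X) : ‖precompDual (𝕜 := 𝕜) S‖ ≤ ‖S‖ :=
  LinearMap.mkContinuous_norm_le _ (norm_nonneg S) _

lemma precompDual_add (S S' : X →L[𝕜] X) :
    precompDual (𝕜 := 𝕜) (S + S') = precompDual S + precompDual S' := by
  ext f x; simp

lemma precompDual_smul (c : 𝕜) (S : X →L[𝕜] X) :
    precompDual (𝕜 := 𝕜) (c • S) = c • precompDual S := by
  ext f x; simp

lemma precompDual_id :
    precompDual (𝕜 := 𝕜) (ContinuousLinearMap.id 𝕜 X) = ContinuousLinearMap.id 𝕜 (StrongDual 𝕜 X) := by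
  ext f x; simp

/-- Rank-one operator `f ↦ f x • y` from `StrongDual 𝕜 X` to `Y`. -/
noncomputable def rankOne (x : X) (y : Y) : StrongDual 𝕜 X →L[𝕜] Y :=
  (inclusionInDoubleDual 𝕜 X x).smulRight y

@[simp] lemma rankOne_apply (x : X) (y : Y) (f : StrongDual 𝕜 X) :
    rankOne (𝕜 := 𝕜) x y f = f x • y := rfl

lemma rankOne_norm (x : X) (y : Y) : ‖rankOne (𝕜 := 𝕜) x y‖ = ‖x‖ * ‖y‖ := by
  rw [rankOne, ContinuousLinearMap.norm_smulRight_apply]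
  congr 1
  exact (inclusionInDoubleDualLi 𝕜 (E := X)).norm_map x

lemma isCompactOperator_rankOne (x : X) (y : Y) :
    IsCompactOperator (rankOne (𝕜 := 𝕜) x y) := by
  refine ⟨(fun c : 𝕜 => c • y) '' Metric.closedBall 0 (‖x‖ + 1), ?_, ?_⟩
  · exact ((isCompact_closedBall 0 _).image (by fun_prop))
  · apply Filter.mem_of_superset (Metric.ball_mem_nhds (0 : StrongDual 𝕜 X) one_pos)
    intro f hf
    refine ⟨f x, ?_, rfl⟩
    rw [Metric.mem_closedBall, dist_zero_right]
    calc ‖f x‖ ≤ ‖f‖ * ‖x‖ := f.le_opNorm x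
      _ ≤ 1 * ‖x‖ := by
          gcongr
          exact le_of_lt (by simpa [dist_zero_right] using hf)
      _ ≤ ‖x‖ + 1 := by linarith [norm_nonneg x]

lemma rankOne_weakCont (x : X) (y : Y) :
    Continuous (fun f : WeakDual 𝕜 X =>
      toWeakSpace 𝕜 Y ((rankOne (𝕜 := 𝕜) x y) (WeakDual.toStrongDual f))) := by
  apply WeakBilin.continuous_of_continuous_eval
  intro g
  show Continuous fun f : WeakDual 𝕜 X => g ((f x) • y)
  simp only [map_smul, smul_eq_mul]
  exact (WeakDual.eval_continuous x).mul continuous_const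

/-- Restriction of an operator to an invariant submodule. -/
noncomputable def restrictPhi {E : Type*} [NormedAddCommGroup E] [NormedSpace 𝕜 E]
    (Z : Submodule 𝕜 E) (Ψ : E →L[𝕜] E) (hmem : ∀ v ∈ Z, Ψ v ∈ Z) : ↥Z →L[𝕜] ↥Z :=
  LinearMap.mkContinuous
    { toFun := fun v => ⟨Ψ v, hmem v v.2⟩
      map_add' := fun a b => by ext; simp
      map_smul' := fun c a => by ext; simp }
    ‖Ψ‖ (fun v => by
      show ‖Ψ (v : E)‖ ≤ ‖Ψ‖ * ‖v‖
      simpa using Ψ.le_opNorm (v : E))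

@[simp] lemma restrictPhi_apply {E : Type*} [NormedAddCommGroup E] [NormedSpace 𝕜 E]
    (Z : Submodule 𝕜 E) (Ψ : E →L[𝕜] E) (hmem : ∀ v ∈ Z, Ψ v ∈ Z) (v : ↥Z) :
    (restrictPhi Z Ψ hmem v : E) = Ψ (v : E) := rfl

end Stmt7

set_option maxHeartbeats 1600000 in
set_option synthInstance.maxHeartbeats 400000 in
open Stmt7 NormedSpace ContinuousLinearMap in
/-- `n(K_{w*}(X*,Y)) ≤ min{n(X), n(Y)}`, where `K_{w*}(X*,Y)` is the space of
compact weak*-to-weak continuous operators from `X*` to `Y`, with the operator norm. -/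
theorem numIndex_weakStarCompactOperators_le_min {𝕜 X Y : Type*} [RCLike 𝕜]
    [NormedAddCommGroup X] [NormedSpace 𝕜 X] [CompleteSpace X]
    [NormedAddCommGroup Y] [NormedSpace 𝕜 Y] [CompleteSpace Y]
    (Z : Submodule 𝕜 (StrongDual 𝕜 X →L[𝕜] Y))
    (hZ : ∀ T : StrongDual 𝕜 X →L[𝕜] Y, T ∈ Z ↔
      (IsCompactOperator T ∧
        Continuous (fun f : WeakDual 𝕜 X => toWeakSpace 𝕜 Y (T (WeakDual.toStrongDual f))))) :
    @numIndex 𝕜 _ ↥Z (@Submodule.normedAddCommGroup 𝕜 (StrongDual 𝕜 X →L[𝕜] Y) _ _ _ Z)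
      (@Submodule.normedSpace 𝕜 𝕜 _ _ _ (StrongDual 𝕜 X →L[𝕜] Y) _ _ _ _ Z) ≤ min (numIndex 𝕜 X) (numIndex 𝕜 Y) := by
  classical
  letI : NormedAddCommGroup ↥Z := @Submodule.normedAddCommGroup 𝕜 (StrongDual 𝕜 X →L[𝕜] Y) _ _ _ Z
  letI : NormedSpace 𝕜 ↥Z := @Submodule.normedSpace 𝕜 𝕜 _ _ _ (StrongDual 𝕜 X →L[𝕜] Y) _ _ _ _ Z
  have hminnn : (0 : ℝ) ≤ min (numIndex 𝕜 X) (numIndex 𝕜 Y) :=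
    le_min (numIndex_nonneg X) (numIndex_nonneg Y)
  -- trivial cases
  rcases subsingleton_or_nontrivial X with hX | hX
  · haveI : Subsingleton (StrongDual 𝕜 X →L[𝕜] Y) := by
      constructor
      intro a b
      ext f
      have hf : f = 0 := by ext x; rw [Subsingleton.elim x 0, map_zero, ContinuousLinearMap.zero_apply]
      rw [hf, map_zero, map_zero]
    haveI : Subsingleton ↥Z := inferInstance
    rw [numIndex_subsingleton (𝕜 := 𝕜) ↥Z]
    exact hminnn
  rcases subsingleton_or_nontrivial Y with hY | hY
  · haveI : Subsingleton (StrongDual 𝕜 X →L[𝕜] Y) := by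
      constructor
      intro a b
      ext f
      exact Subsingleton.elim _ _
    haveI : Subsingleton ↥Z := inferInstance
    rw [numIndex_subsingleton (𝕜 := 𝕜) ↥Z]
    exact hminnn
  -- main case
  have hrankmem : ∀ (x : X) (y : Y), rankOne (𝕜 := 𝕜) x y ∈ Z := fun x y =>
    (hZ _).mpr ⟨isCompactOperator_rankOne x y, rankOne_weakCont x y⟩
  refine le_min ?_ ?_
  · -- ≤ numIndex 𝕜 X
    refine le_csInf ⟨numRadius 𝕜 (ContinuousLinearMap.id 𝕜 X),
      ContinuousLinearMap.id 𝕜 X, ContinuousLinearMap.norm_id, rfl⟩ ?_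
    rintro r ⟨S, hS, rfl⟩
    set Sd : StrongDual 𝕜 X →L[𝕜] StrongDual 𝕜 X := precompDual S with hSd
    set Ψ : (StrongDual 𝕜 X →L[𝕜] Y) →L[𝕜] (StrongDual 𝕜 X →L[𝕜] Y) :=
      (ContinuousLinearMap.compL 𝕜 (StrongDual 𝕜 X) (StrongDual 𝕜 X) Y).flip Sd with hΨ
    have hΨapp : ∀ T : StrongDual 𝕜 X →L[𝕜] Y, Ψ T = T.comp Sd := fun T => rfl
    have hmem : ∀ T ∈ Z, Ψ T ∈ Z := by
      intro T hT
      rw [hZ] at hT ⊢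
      obtain ⟨hTc, hTw⟩ := hT
      constructor
      · rw [hΨapp]
        exact hTc.comp_clm Sd
      · have hσ : Continuous (fun f : WeakDual 𝕜 X =>
            StrongDual.toWeakDual (Sd (WeakDual.toStrongDual f))) := by
          apply WeakDual.continuous_of_continuous_eval
          intro x
          exact WeakDual.eval_continuous (S x)
        exact hTw.comp hσ
    set Φ := restrictPhi (𝕜 := 𝕜) (E := StrongDual 𝕜 X →L[𝕜] Y) Z Ψ hmem with hΦ
    have hΦapp : ∀ T : ↥Z, ((Φ T : ↥Z) : StrongDual 𝕜 X →L[𝕜] Y)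
        = (T : StrongDual 𝕜 X →L[𝕜] Y).comp Sd := fun T => rfl
    have hΦle : ∀ T : ↥Z, ‖Φ T‖ ≤ ‖T‖ := by
      intro T
      have h1 : ‖Φ T‖ = ‖(T : StrongDual 𝕜 X →L[𝕜] Y).comp Sd‖ := by
        rw [Submodule.coe_norm, hΦapp]
      rw [h1]
      calc ‖(T : StrongDual 𝕜 X →L[𝕜] Y).comp Sd‖ ≤ ‖(T : StrongDual 𝕜 X →L[𝕜] Y)‖ * ‖Sd‖ :=
            ContinuousLinearMap.opNorm_comp_le _ _
        _ ≤ ‖(T : StrongDual 𝕜 X →L[𝕜] Y)‖ * 1 := by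
            gcongr
            rw [hSd]; exact (precompDual_norm_le S).trans (le_of_eq hS)
        _ = ‖T‖ := by rw [mul_one]; rfl
    have hΦnorm : ‖Φ‖ = 1 := by
      apply le_antisymm
      · apply ContinuousLinearMap.opNorm_le_bound _ zero_le_one
        intro T
        rw [one_mul]
        exact hΦle T
      · apply le_of_forall_lt
        intro r hr
        rcases lt_or_ge r 0 with hr0 | hr0
        · exact lt_of_lt_of_le hr0 (norm_nonneg Φ)
        have hr' : r < ‖S‖ := by rw [hS]; exact hr
        obtain ⟨x, hx1, hx2⟩ := S.exists_lt_apply_of_lt_opNorm hr'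
        obtain ⟨y₀, hy₀⟩ := exists_ne (0 : Y)
        set y : Y := ((‖y₀‖ : 𝕜))⁻¹ • y₀ with hy
        have hny₀ : (‖y₀‖ : ℝ) ≠ 0 := norm_ne_zero_iff.mpr hy₀
        have hy1 : ‖y‖ = 1 := by
          rw [hy, norm_smul, norm_inv, RCLike.norm_ofReal, abs_of_nonneg (norm_nonneg y₀)]
          exact inv_mul_cancel₀ hny₀
        set Te : ↥Z := ⟨rankOne x y, hrankmem x y⟩ with hTe
        have hTe1 : ‖Te‖ ≤ 1 := by
          show ‖rankOne (𝕜 := 𝕜) x y‖ ≤ 1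
          rw [rankOne_norm, hy1, mul_one]
          exact hx1.le
        have hcomp : Ψ (rankOne x y) = rankOne (S x) y := by
          ext f
          simp [hΨapp, hSd]
        have hΦTe : ‖Φ Te‖ = ‖S x‖ := by
          rw [Submodule.coe_norm]
          show ‖Ψ (rankOne x y)‖ = ‖S x‖
          rw [hcomp, rankOne_norm, hy1, mul_one]
        calc r < ‖S x‖ := hx2
          _ = ‖Φ Te‖ := hΦTe.symm
          _ ≤ ‖Φ‖ * ‖Te‖ := Φ.le_opNorm Te
          _ ≤ ‖Φ‖ * 1 := by gcongr
          _ = ‖Φ‖ := mul_one _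
    have hfinal : numRadius 𝕜 Φ ≤ numRadius 𝕜 S := by
      apply numRadius_le_of_norm_id_add_le
      intro c
      apply ContinuousLinearMap.opNorm_le_bound _ (norm_nonneg _)
      intro T
      rw [ContinuousLinearMap.add_apply, ContinuousLinearMap.smul_apply,
        ContinuousLinearMap.id_apply, Submodule.coe_norm]
      have hcoe : ((T + c • Φ T : ↥Z) : StrongDual 𝕜 X →L[𝕜] Y)
          = (T : StrongDual 𝕜 X →L[𝕜] Y).comp (precompDual (ContinuousLinearMap.id 𝕜 X + c • S)) := by
        rw [precompDual_add, precompDual_id, precompDual_smul, ContinuousLinearMap.comp_add,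
          ContinuousLinearMap.comp_id, ContinuousLinearMap.comp_smul,
          Submodule.coe_add, Submodule.coe_smul, hΦapp]
      rw [hcoe]
      calc ‖(T : StrongDual 𝕜 X →L[𝕜] Y).comp (precompDual (ContinuousLinearMap.id 𝕜 X + c • S))‖
          ≤ ‖(T : StrongDual 𝕜 X →L[𝕜] Y)‖ * ‖precompDual (ContinuousLinearMap.id 𝕜 X + c • S)‖ :=
            ContinuousLinearMap.opNorm_comp_le _ _
        _ ≤ ‖(T : StrongDual 𝕜 X →L[𝕜] Y)‖ * ‖ContinuousLinearMap.id 𝕜 X + c • S‖ := by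
            gcongr
            exact precompDual_norm_le _
        _ = ‖ContinuousLinearMap.id 𝕜 X + c • S‖ * ‖T‖ := by
            rw [Submodule.coe_norm]; ring
    calc numIndex 𝕜 ↥Z ≤ numRadius 𝕜 Φ := numIndex_le_numRadius Φ hΦnorm
      _ ≤ numRadius 𝕜 S := hfinal
  · -- ≤ numIndex 𝕜 Y
    refine le_csInf ⟨numRadius 𝕜 (ContinuousLinearMap.id 𝕜 Y),
      ContinuousLinearMap.id 𝕜 Y, ContinuousLinearMap.norm_id, rfl⟩ ?_
    rintro r ⟨R, hR, rfl⟩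
    set Ψ : (StrongDual 𝕜 X →L[𝕜] Y) →L[𝕜] (StrongDual 𝕜 X →L[𝕜] Y) :=
      ContinuousLinearMap.compL 𝕜 (StrongDual 𝕜 X) Y Y R with hΨ
    have hΨapp : ∀ T : StrongDual 𝕜 X →L[𝕜] Y, Ψ T = R.comp T := fun T => rfl
    have hmem : ∀ T ∈ Z, Ψ T ∈ Z := by
      intro T hT
      rw [hZ] at hT ⊢
      obtain ⟨hTc, hTw⟩ := hT
      constructor
      · rw [hΨapp]
        exact hTc.clm_comp R
      · rw [hΨapp]
        apply WeakBilin.continuous_of_continuous_eval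
        intro g
        exact (WeakBilin.eval_continuous _ (g.comp R)).comp hTw
    set Φ := restrictPhi (𝕜 := 𝕜) (E := StrongDual 𝕜 X →L[𝕜] Y) Z Ψ hmem with hΦ
    have hΦapp : ∀ T : ↥Z, ((Φ T : ↥Z) : StrongDual 𝕜 X →L[𝕜] Y)
        = R.comp (T : StrongDual 𝕜 X →L[𝕜] Y) := fun T => rfl
    have hΦnorm : ‖Φ‖ = 1 := by
      apply le_antisymm
      · apply ContinuousLinearMap.opNorm_le_bound _ zero_le_one
        intro T
        rw [one_mul, Submodule.coe_norm, hΦapp]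
        calc ‖R.comp (T : StrongDual 𝕜 X →L[𝕜] Y)‖ ≤ ‖R‖ * ‖(T : StrongDual 𝕜 X →L[𝕜] Y)‖ :=
              ContinuousLinearMap.opNorm_comp_le _ _
          _ = ‖T‖ := by rw [hR, one_mul, Submodule.coe_norm]
      · apply le_of_forall_lt
        intro r hr
        rcases lt_or_ge r 0 with hr0 | hr0
        · exact lt_of_lt_of_le hr0 (norm_nonneg Φ)
        have hr' : r < ‖R‖ := by rw [hR]; exact hr
        obtain ⟨y, hy1, hy2⟩ := R.exists_lt_apply_of_lt_opNorm hr'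
        obtain ⟨x₀, hx₀⟩ := exists_ne (0 : X)
        set x : X := ((‖x₀‖ : 𝕜))⁻¹ • x₀ with hx
        have hnx₀ : (‖x₀‖ : ℝ) ≠ 0 := norm_ne_zero_iff.mpr hx₀
        have hx1 : ‖x‖ = 1 := by
          rw [hx, norm_smul, norm_inv, RCLike.norm_ofReal, abs_of_nonneg (norm_nonneg x₀)]
          exact inv_mul_cancel₀ hnx₀
        set Te : ↥Z := ⟨rankOne x y, hrankmem x y⟩ with hTe
        have hTe1 : ‖Te‖ ≤ 1 := by
          show ‖rankOne (𝕜 := 𝕜) x y‖ ≤ 1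
          rw [rankOne_norm, hx1, one_mul]
          exact hy1.le
        have hcomp : Ψ (rankOne x y) = rankOne x (R y) := by
          ext f
          simp [hΨapp, map_smul]
        have hΦTe : ‖Φ Te‖ = ‖R y‖ := by
          rw [Submodule.coe_norm]
          show ‖Ψ (rankOne x y)‖ = ‖R y‖
          rw [hcomp, rankOne_norm, hx1, one_mul]
        calc r < ‖R y‖ := hy2
          _ = ‖Φ Te‖ := hΦTe.symm
          _ ≤ ‖Φ‖ * ‖Te‖ := Φ.le_opNorm Te
          _ ≤ ‖Φ‖ * 1 := by gcongr
          _ = ‖Φ‖ := mul_one _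
    have hfinal : numRadius 𝕜 Φ ≤ numRadius 𝕜 R := by
      apply numRadius_le_of_norm_id_add_le
      intro c
      apply ContinuousLinearMap.opNorm_le_bound _ (norm_nonneg _)
      intro T
      rw [ContinuousLinearMap.add_apply, ContinuousLinearMap.smul_apply,
        ContinuousLinearMap.id_apply, Submodule.coe_norm]
      have hcoe : ((T + c • Φ T : ↥Z) : StrongDual 𝕜 X →L[𝕜] Y)
          = (ContinuousLinearMap.id 𝕜 Y + c • R).comp (T : StrongDual 𝕜 X →L[𝕜] Y) := by
        rw [ContinuousLinearMap.add_comp, ContinuousLinearMap.id_comp,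
          ContinuousLinearMap.smul_comp, Submodule.coe_add, Submodule.coe_smul, hΦapp]
      rw [hcoe]
      calc ‖(ContinuousLinearMap.id 𝕜 Y + c • R).comp (T : StrongDual 𝕜 X →L[𝕜] Y)‖
          ≤ ‖ContinuousLinearMap.id 𝕜 Y + c • R‖ * ‖(T : StrongDual 𝕜 X →L[𝕜] Y)‖ :=
            ContinuousLinearMap.opNorm_comp_le _ _
        _ = ‖ContinuousLinearMap.id 𝕜 Y + c • R‖ * ‖T‖ := by rw [Submodule.coe_norm]
    calc numIndex 𝕜 ↥Z ≤ numRadius 𝕜 Φ := numIndex_le_numRadius Φ hΦnorm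
      _ ≤ numRadius 𝕜 R := hfinal
end
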